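/- Let ‖·‖ be any submultiplicative matrix norm, L ≥ 1, α ∈ (0,1), and Δ = (α^{1/2} − α)/L. Suppose the square matrices {Φ_t}_{t=t'+1}^{t''} satisfy ‖Φ_b Φ_{b−1} ⋯ Φ_a‖ ≤ L α^{b−a+1} for every t'+1 ≤ a ≤ b ≤ t'' (with the empty product equal to the identity, of norm ≤ L), and the matrices {Φ'_t}_{t=t'+1}^{t''} satisfy ‖Φ_t − Φ'_t‖ ≤ Δ for every t ∈ {t'+1,…,t''}. Then ‖Φ'_{t''} Φ'_{t''−1} ⋯ Φ'_{t'+1}‖ ≤ L α^{(t''−t')/2}. -/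

import Mathlib

open Matrix BigOperators

/-- `mprod Φ a k = Φ (a+k-1) * ⋯ * Φ (a+1) * Φ a`: the ordered product of `k` factors
starting at index `a` (larger indices on the left). -/
def mprod {n : ℕ} (Φ : ℕ → Matrix (Fin n) (Fin n) ℝ) (a : ℕ) : ℕ → Matrix (Fin n) (Fin n) ℝ
  | 0 => 1
  | k + 1 => Φ (a + k) * mprod Φ a k

/-- Perturbation expansion: the product of the `Φ'` factors equals the product of the
`Φ` factors plus, for each position `j`, a term with `Φ`-factors on the left, the error
`Φ' - Φ` at position `a+j`, and `Φ'`-factors on the right. -/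
lemma mprod_expand {n : ℕ} (Φ Φ' : ℕ → Matrix (Fin n) (Fin n) ℝ) (a : ℕ) :
    ∀ k : ℕ, mprod Φ' a k = mprod Φ a k +
      ∑ j ∈ Finset.range k,
        mprod Φ (a + j + 1) (k - 1 - j) * (Φ' (a + j) - Φ (a + j)) * mprod Φ' a j := by
  intro k
  induction k with
  | zero => simp [mprod]
  | succ k ih =>
    rw [Finset.sum_range_succ]
    have hterm : mprod Φ (a + k + 1) (k + 1 - 1 - k) = 1 := by
      simp [mprod]
    have hsum : ∀ j ∈ Finset.range k,
        mprod Φ (a + j + 1) (k + 1 - 1 - j) * (Φ' (a + j) - Φ (a + j)) * mprod Φ' a j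
        = Φ (a + k) * (mprod Φ (a + j + 1) (k - 1 - j) * (Φ' (a + j) - Φ (a + j)) *
            mprod Φ' a j) := by
      intro j hj
      rw [Finset.mem_range] at hj
      have h1 : k + 1 - 1 - j = (k - 1 - j) + 1 := by omega
      have h2 : a + j + 1 + (k - 1 - j) = a + k := by omega
      rw [h1, mprod, h2]
      noncomm_ring
    rw [Finset.sum_congr rfl hsum, ← Finset.mul_sum, hterm, one_mul]
    show Φ' (a + k) * mprod Φ' a k = Φ (a + k) * mprod Φ a k + _
    rw [ih]
    noncomm_ring

/-- Lemma `help-3`.  For any submultiplicative matrix norm `ν`,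
`L ≥ 1`, `α ∈ (0,1)`, `Δ = (√α − α)/L`: if the matrices `{Φ_t}_{t=t'+1}^{t''}` satisfy
`ν(Φ_b ⋯ Φ_a) ≤ L α^{b−a+1}` for all `t'+1 ≤ a ≤ b ≤ t''` (with the empty product, the
identity, of norm `≤ L`), and `ν(Φ_t − Φ'_t) ≤ Δ` for `t ∈ {t'+1,…,t''}`, then
`ν(Φ'_{t''} ⋯ Φ'_{t'+1}) ≤ L α^{(t''−t')/2}`. -/
theorem perturbed_product_bound
    {n : ℕ} (ν : Matrix (Fin n) (Fin n) ℝ → ℝ)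
    (hnonneg : ∀ A, 0 ≤ ν A)
    (hdef : ∀ A, ν A = 0 → A = 0)
    (hadd : ∀ A B, ν (A + B) ≤ ν A + ν B)
    (hhom : ∀ (c : ℝ) (A), ν (c • A) = |c| * ν A)
    (hsubmul : ∀ A B, ν (A * B) ≤ ν A * ν B)
    (L α : ℝ) (hL : 1 ≤ L) (hα0 : 0 < α) (hα1 : α < 1)
    (t' t'' : ℕ) (hlt : t' < t'')
    (Φ Φ' : ℕ → Matrix (Fin n) (Fin n) ℝ)
    (hone : ν 1 ≤ L)
    (hprod : ∀ a k : ℕ, t' + 1 ≤ a → 1 ≤ k → a + k - 1 ≤ t'' →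
      ν (mprod Φ a k) ≤ L * α ^ k)
    (hclose : ∀ t, t' + 1 ≤ t → t ≤ t'' → ν (Φ t - Φ' t) ≤ (Real.sqrt α - α) / L) :
    ν (mprod Φ' (t' + 1) (t'' - t')) ≤ L * Real.sqrt (α ^ (t'' - t')) := by
  set β := Real.sqrt α with hβ
  have hβ0 : 0 < β := Real.sqrt_pos.mpr hα0
  have hβsq : β ^ 2 = α := Real.sq_sqrt hα0.le
  have hαβ : α ≤ β := by
    nlinarith [Real.sqrt_nonneg α]
  have hL0 : (0 : ℝ) < L := lt_of_lt_of_le one_pos hL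
  have hν0 : ν 0 = 0 := by
    have := hhom 0 0
    simpa using this
  -- subadditivity over finite sums
  have hsum : ∀ (s : Finset ℕ) (f : ℕ → Matrix (Fin n) (Fin n) ℝ),
      ν (∑ j ∈ s, f j) ≤ ∑ j ∈ s, ν (f j) := by
    intro s f
    classical
    induction s using Finset.cons_induction with
    | empty => simp [hν0]
    | cons i s hi ihs =>
      rw [Finset.sum_cons, Finset.sum_cons]
      exact le_trans (hadd _ _) (by linarith)
  -- norm of Φ' - Φ
  have hclose' : ∀ t, t' + 1 ≤ t → t ≤ t'' → ν (Φ' t - Φ t) ≤ (β - α) / L := by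
    intro t h1 h2
    have : Φ' t - Φ t = (-1 : ℝ) • (Φ t - Φ' t) := by simp
    rw [this, hhom]
    simpa using hclose t h1 h2
  -- uniform bound on Φ-products, including the empty one
  have hP : ∀ a m : ℕ, t' + 1 ≤ a → a + m ≤ t'' + 1 → ν (mprod Φ a m) ≤ L * α ^ m := by
    intro a m ha hm
    rcases Nat.eq_zero_or_pos m with rfl | hm1
    · simpa [mprod] using hone
    · exact hprod a m ha hm1 (by omega)
  -- main claim by strong induction
  have main : ∀ k : ℕ, t' + k ≤ t'' → ν (mprod Φ' (t' + 1) k) ≤ L * β ^ k := by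
    intro k
    induction k using Nat.strong_induction_on with
    | _ k ih =>
      intro hk
      rw [mprod_expand Φ Φ' (t' + 1) k]
      set a := t' + 1 with ha
      have step : ν (mprod Φ a k +
          ∑ j ∈ Finset.range k,
            mprod Φ (a + j + 1) (k - 1 - j) * (Φ' (a + j) - Φ (a + j)) * mprod Φ' a j)
          ≤ ν (mprod Φ a k) + ∑ j ∈ Finset.range k,
            ν (mprod Φ (a + j + 1) (k - 1 - j) * (Φ' (a + j) - Φ (a + j)) * mprod Φ' a j) := by
        have hs := hsum (Finset.range k)
          fun j => mprod Φ (a + j + 1) (k - 1 - j) * (Φ' (a + j) - Φ (a + j)) * mprod Φ' a j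
        exact le_trans (hadd _ _) (by linarith)
      refine le_trans step ?_
      have hterm : ∀ j ∈ Finset.range k,
          ν (mprod Φ (a + j + 1) (k - 1 - j) * (Φ' (a + j) - Φ (a + j)) * mprod Φ' a j)
          ≤ (L * α ^ (k - 1 - j)) * ((β - α) / L) * (L * β ^ j) := by
        intro j hj
        rw [Finset.mem_range] at hj
        have h1 : ν (mprod Φ (a + j + 1) (k - 1 - j)) ≤ L * α ^ (k - 1 - j) :=
          hP (a + j + 1) (k - 1 - j) (by omega) (by omega)
        have h2 : ν (Φ' (a + j) - Φ (a + j)) ≤ (β - α) / L :=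
          hclose' (a + j) (by omega) (by omega)
        have h3 : ν (mprod Φ' a j) ≤ L * β ^ j := ih j hj (by omega)
        calc ν (mprod Φ (a + j + 1) (k - 1 - j) * (Φ' (a + j) - Φ (a + j)) * mprod Φ' a j)
            ≤ ν (mprod Φ (a + j + 1) (k - 1 - j) * (Φ' (a + j) - Φ (a + j))) * ν (mprod Φ' a j) :=
              hsubmul _ _
          _ ≤ (ν (mprod Φ (a + j + 1) (k - 1 - j)) * ν (Φ' (a + j) - Φ (a + j))) *
                ν (mprod Φ' a j) :=
              mul_le_mul_of_nonneg_right (hsubmul _ _) (hnonneg _)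
          _ ≤ (L * α ^ (k - 1 - j)) * ((β - α) / L) * (L * β ^ j) := by
              have hΔ : (0:ℝ) ≤ (β - α) / L := div_nonneg (by linarith) hL0.le
              exact mul_le_mul (mul_le_mul h1 h2 (hnonneg _) (by positivity)) h3
                (hnonneg _) (by positivity)
      have hsum2 : ∑ j ∈ Finset.range k,
          ν (mprod Φ (a + j + 1) (k - 1 - j) * (Φ' (a + j) - Φ (a + j)) * mprod Φ' a j)
          ≤ ∑ j ∈ Finset.range k, (L * α ^ (k - 1 - j)) * ((β - α) / L) * (L * β ^ j) :=
        Finset.sum_le_sum hterm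
      have hgeom : ∑ j ∈ Finset.range k, (L * α ^ (k - 1 - j)) * ((β - α) / L) * (L * β ^ j)
          = L * (β ^ k - α ^ k) := by
        have := geom_sum₂_mul β α k
        calc ∑ j ∈ Finset.range k, (L * α ^ (k - 1 - j)) * ((β - α) / L) * (L * β ^ j)
            = L * ((∑ j ∈ Finset.range k, β ^ j * α ^ (k - 1 - j)) * (β - α)) := by
              rw [Finset.sum_mul, Finset.mul_sum]
              apply Finset.sum_congr rfl
              intro j hj
              field_simp
          _ = L * (β ^ k - α ^ k) := by rw [this]
      have hPk : ν (mprod Φ a k) ≤ L * α ^ k := hP a k le_rfl (by omega)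
      calc ν (mprod Φ a k) + ∑ j ∈ Finset.range k,
            ν (mprod Φ (a + j + 1) (k - 1 - j) * (Φ' (a + j) - Φ (a + j)) * mprod Φ' a j)
          ≤ L * α ^ k + L * (β ^ k - α ^ k) := by
            rw [← hgeom]; exact add_le_add hPk hsum2
        _ = L * β ^ k := by ring
  have hgoal := main (t'' - t') (by omega)
  have hsqrt : Real.sqrt (α ^ (t'' - t')) = β ^ (t'' - t') := by
    have h1 : (β ^ (t'' - t')) ^ 2 = α ^ (t'' - t') := by
      rw [← pow_mul, mul_comm, pow_mul, hβsq]
    rw [← h1, Real.sqrt_sq (pow_nonneg hβ0.le _)]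
  rw [hsqrt]
  exact hgoal
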